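/- Let G be a locally compact Hausdorff group, let α = ({D_t}_{t∈G}, {α_t}_{t∈G}) be a partial action of G on a C*-algebra A, and let (β, B, ι_B) and (γ, C, ι_C) be two enveloping actions of α: β and γ are continuous actions of G on C*-algebras B and C; ι_B : A → B and ι_C : A → C are injective *-homomorphisms whose ranges are closed two-sided ideals; for every t ∈ G one has ι_B(D_t) = ι_B(A) ∩ β_t(ι_B(A)), ι_C(D_t) = ι_C(A) ∩ γ_t(ι_C(A)), and β_t(ι_B(a)) = ι_B(α_t(a)), γ_t(ι_C(a)) = ι_C(α_t(a)) for all a ∈ D_{t⁻¹}; and the closed linear span of {β_t(ι_B(a)) : t ∈ G, a ∈ A} is B, while the closed linear span of {γ_t(ι_C(a)) : t ∈ G, a ∈ A} is C. Then there exists a unique *-isomorphism φ : B → C such that φ ∘ β_t = γ_t ∘ φ for every t ∈ G and φ(ι_B(a)) = ι_C(a) for every a ∈ A. -/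

import Mathlib

set_option linter.unusedSectionVars false


/-- A partial action of a topological group `G` on a (not necessarily unital) C*-algebra
`A`: a family of closed two-sided ideals `dom t` together with maps `act t` restricting
to *-isomorphisms `dom t⁻¹ → dom t`, such that `dom 1 = A`, `act 1 = id`,
`act (s * t)` extends `act s ∘ act t`, the family of ideals is continuous (every open
set hits an open set of indices), and `(t, x) ↦ act t x` is continuous. -/
structure CStarPartialAction (G A : Type*) [Group G] [TopologicalSpace G]
    [NonUnitalNormedRing A] [StarRing A] [NormedSpace ℂ A] where
  dom : G → Set A
  act : G → A → A
  isClosed_dom : ∀ t, IsClosed (dom t)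
  zero_mem : ∀ t, (0 : A) ∈ dom t
  add_mem : ∀ t, ∀ x ∈ dom t, ∀ y ∈ dom t, x + y ∈ dom t
  smul_mem : ∀ t (c : ℂ), ∀ x ∈ dom t, c • x ∈ dom t
  mul_mem_left : ∀ t (a : A), ∀ x ∈ dom t, a * x ∈ dom t
  mul_mem_right : ∀ t (a : A), ∀ x ∈ dom t, x * a ∈ dom t
  bijOn : ∀ t, Set.BijOn (act t) (dom t⁻¹) (dom t)
  act_add : ∀ t, ∀ x ∈ dom t⁻¹, ∀ y ∈ dom t⁻¹, act t (x + y) = act t x + act t y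
  act_smul : ∀ t (c : ℂ), ∀ x ∈ dom t⁻¹, act t (c • x) = c • act t x
  act_mul : ∀ t, ∀ x ∈ dom t⁻¹, ∀ y ∈ dom t⁻¹, act t (x * y) = act t x * act t y
  act_star : ∀ t, ∀ x ∈ dom t⁻¹, act t (star x) = star (act t x)
  dom_one : dom 1 = Set.univ
  act_one : ∀ x, act 1 x = x
  act_comp : ∀ s t x, x ∈ dom t⁻¹ → act t x ∈ dom s⁻¹ →
    x ∈ dom (s * t)⁻¹ ∧ act (s * t) x = act s (act t x)
  isOpen_hit : ∀ U : Set A, IsOpen U → IsOpen {t : G | (U ∩ dom t).Nonempty}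
  continuousOn : ContinuousOn (fun p : G × A => act p.1 p.2) {p : G × A | p.2 ∈ dom p.1⁻¹}

/-- A continuous (global) action of a topological group `G` on a C*-algebra `B` by
*-automorphisms: each `β t` is a *-homomorphism, `β 1 = id`, `β s ∘ β t = β (s * t)`
(so each `β t` is bijective), and `t ↦ β t b` is continuous for every `b`. -/
def IsContCStarAction (G B : Type*) [Group G] [TopologicalSpace G]
    [NonUnitalNormedRing B] [StarRing B] [NormedSpace ℂ B] (β : G → B → B) : Prop :=
  (∀ t (x y : B), β t (x + y) = β t x + β t y) ∧
  (∀ t (c : ℂ) (x : B), β t (c • x) = c • β t x) ∧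
  (∀ t (x y : B), β t (x * y) = β t x * β t y) ∧
  (∀ t (x : B), β t (star x) = star (β t x)) ∧
  (∀ x : B, β 1 x = x) ∧
  (∀ s t (x : B), β s (β t x) = β (s * t) x) ∧
  (∀ x : B, Continuous fun t => β t x)

variable {G : Type*} [Group G] [TopologicalSpace G] [IsTopologicalGroup G]
  [LocallyCompactSpace G] [T2Space G]
variable {A : Type*} [NonUnitalNormedRing A] [StarRing A] [CStarRing A]
  [NormedSpace ℂ A] [IsScalarTower ℂ A A] [SMulCommClass ℂ A A]
  [StarModule ℂ A] [CompleteSpace A]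
variable {B : Type*} [NonUnitalNormedRing B] [StarRing B] [CStarRing B]
  [NormedSpace ℂ B] [IsScalarTower ℂ B B] [SMulCommClass ℂ B B]
  [StarModule ℂ B] [CompleteSpace B]
variable {C : Type*} [NonUnitalNormedRing C] [StarRing C] [CStarRing C]
  [NormedSpace ℂ C] [IsScalarTower ℂ C C] [SMulCommClass ℂ C C]
  [StarModule ℂ C] [CompleteSpace C]

structure EnvAux (α : CStarPartialAction G A) (β : G → B → B) (ι : A →⋆ₙₐ[ℂ] B) : Prop where
  hact : IsContCStarAction G B β
  inj : Function.Injective ι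
  hleft : ∀ b : B, ∀ x ∈ Set.range ι, b * x ∈ Set.range ι
  hright : ∀ b : B, ∀ x ∈ Set.range ι, x * b ∈ Set.range ι
  hdom : ∀ t, ι '' α.dom t = Set.range ι ∩ (β t '' Set.range ι)
  hres : ∀ t, ∀ a ∈ α.dom t⁻¹, β t (ι a) = ι (α.act t a)

namespace EnvAux

variable {α : CStarPartialAction G A} {β : G → B → B} {ι : A →⋆ₙₐ[ℂ] B}
  {γ : G → C → C} {ιC : A →⋆ₙₐ[ℂ] C}

theorem beta_add (h : EnvAux α β ι) (t : G) (x y : B) : β t (x + y) = β t x + β t y :=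
  h.hact.1 t x y
theorem beta_smul (h : EnvAux α β ι) (t : G) (c : ℂ) (x : B) : β t (c • x) = c • β t x :=
  h.hact.2.1 t c x
theorem beta_mul (h : EnvAux α β ι) (t : G) (x y : B) : β t (x * y) = β t x * β t y :=
  h.hact.2.2.1 t x y
theorem beta_star (h : EnvAux α β ι) (t : G) (x : B) : β t (star x) = star (β t x) :=
  h.hact.2.2.2.1 t x
theorem beta_one (h : EnvAux α β ι) (x : B) : β 1 x = x := h.hact.2.2.2.2.1 x
theorem beta_comp (h : EnvAux α β ι) (s t : G) (x : B) : β s (β t x) = β (s * t) x :=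
  h.hact.2.2.2.2.2.1 s t x

theorem beta_zero (h : EnvAux α β ι) (t : G) : β t (0 : B) = 0 := by
  have := h.beta_smul t 0 0
  simpa using this

theorem beta_inv (h : EnvAux α β ι) (t : G) (x : B) : β t (β t⁻¹ x) = x := by
  rw [h.beta_comp, mul_inv_cancel, h.beta_one]

theorem beta_inv' (h : EnvAux α β ι) (t : G) (x : B) : β t⁻¹ (β t x) = x := by
  rw [h.beta_comp, inv_mul_cancel, h.beta_one]

theorem beta_bij (h : EnvAux α β ι) (t : G) : Function.Bijective (β t) :=
  Function.bijective_iff_has_inverse.mpr ⟨β t⁻¹, h.beta_inv' t, h.beta_inv t⟩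

theorem beta_norm (h : EnvAux α β ι) (t : G) (x : B) : ‖β t x‖ = ‖x‖ := by
  letI : NonUnitalCStarAlgebra B := {}
  let f : B →⋆ₙₐ[ℂ] B :=
    { toFun := β t
      map_smul' := h.beta_smul t
      map_zero' := h.beta_zero t
      map_add' := h.beta_add t
      map_mul' := h.beta_mul t
      map_star' := h.beta_star t }
  exact NonUnitalStarAlgHom.norm_map f (h.beta_bij t).1 x

theorem iota_norm (h : EnvAux α β ι) (a : A) : ‖ι a‖ = ‖a‖ := by
  letI : NonUnitalCStarAlgebra A := {}
  letI : NonUnitalCStarAlgebra B := {}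
  exact NonUnitalStarAlgHom.norm_map ι h.inj a

theorem dom_star (h : EnvAux α β ι) {t : G} {a : A} (ha : a ∈ α.dom t) :
    star a ∈ α.dom t := by
  have h1 : ι a ∈ Set.range ι ∩ (β t '' Set.range ι) := by
    rw [← h.hdom]; exact Set.mem_image_of_mem _ ha
  obtain ⟨-, x, ⟨b, rfl⟩, hx⟩ := h1
  have h2 : ι (star a) ∈ ι '' α.dom t := by
    rw [h.hdom]
    refine ⟨⟨star a, rfl⟩, ι (star b), ⟨star b, rfl⟩, ?_⟩
    rw [map_star, h.beta_star, hx, ← map_star]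
  obtain ⟨a', ha', he⟩ := h2
  rwa [← h.inj he]

theorem dom_sub_mem {t : G} {d d' : A} (α : CStarPartialAction G A)
    (hd : d ∈ α.dom t) (hd' : d' ∈ α.dom t) : d - d' ∈ α.dom t := by
  have := α.add_mem t d hd ((-1 : ℂ) • d') (α.smul_mem t (-1) d' hd')
  simpa [sub_eq_add_neg, neg_one_smul] using this

theorem dom_unique (h : EnvAux α β ι) {t : G} {d d' : A} (hd : d ∈ α.dom t)
    (hd' : d' ∈ α.dom t) (He : ∀ e ∈ α.dom t, d * e = d' * e) : d = d' := by
  have hsub : d - d' ∈ α.dom t := dom_sub_mem α hd hd'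
  have hstar : star (d - d') ∈ α.dom t := h.dom_star hsub
  have h0 : (d - d') * star (d - d') = 0 := by
    rw [sub_mul, He _ hstar, sub_self]
  exact sub_eq_zero.mp ((CStarRing.mul_star_self_eq_zero_iff _).mp h0)

theorem prod_gen (h : EnvAux α β ι) (r : G) (a' a : A) :
    ∃ d ∈ α.dom r, β r (ι a') * ι a = ι d ∧
      ∀ x ∈ α.dom r, d * x = α.act r (a' * α.act r⁻¹ (a * x)) := by
  have hmem : β r (ι a') * ι a ∈ ι '' α.dom r := by
    rw [h.hdom]
    refine ⟨h.hleft _ _ ⟨a, rfl⟩, ι a' * β r⁻¹ (ι a), h.hright _ _ ⟨a', rfl⟩, ?_⟩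
    rw [h.beta_mul, h.beta_inv]
  obtain ⟨d, hd, hde⟩ := hmem
  refine ⟨d, hd, hde.symm, fun x hx => ?_⟩
  have hax : a * x ∈ α.dom r := α.mul_mem_left r a x hx
  have hax' : a * x ∈ α.dom r⁻¹⁻¹ := by rwa [inv_inv]
  have h1 : β r⁻¹ (ι (a * x)) = ι (α.act r⁻¹ (a * x)) := h.hres r⁻¹ _ hax'
  have hmem2 : α.act r⁻¹ (a * x) ∈ α.dom r⁻¹ := (α.bijOn r⁻¹).mapsTo hax'
  have hmem3 : a' * α.act r⁻¹ (a * x) ∈ α.dom r⁻¹ := α.mul_mem_left r⁻¹ a' _ hmem2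
  apply h.inj
  calc ι (d * x) = ι d * ι x := map_mul ι d x
    _ = β r (ι a') * ι a * ι x := by rw [hde]
    _ = β r (ι a') * ι (a * x) := by rw [mul_assoc, ← map_mul]
    _ = β r (ι a' * β r⁻¹ (ι (a * x))) := by rw [h.beta_mul, h.beta_inv]
    _ = β r (ι (a' * α.act r⁻¹ (a * x))) := by rw [h1, ← map_mul]
    _ = ι (α.act r (a' * α.act r⁻¹ (a * x))) := h.hres r _ hmem3

theorem prod_gen₂ (hB : EnvAux α β ι) (hC : EnvAux α γ ιC) (r : G) (a' a : A) :
    ∃ d : A, β r (ι a') * ι a = ι d ∧ γ r (ιC a') * ιC a = ιC d := by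
  obtain ⟨d, hd, he, hu⟩ := hB.prod_gen r a' a
  obtain ⟨d', hd', he', hu'⟩ := hC.prod_gen r a' a
  have hdd : d = d' := hB.dom_unique hd hd' fun e hee => by rw [hu e hee, hu' e hee]
  exact ⟨d, he, hdd ▸ he'⟩

theorem pair_mul (hB : EnvAux α β ι) (hC : EnvAux α γ ιC) (s t : G) (a' a : A) :
    ∃ d : A, β s (ι a') * β t (ι a) = β t (ι d) ∧ γ s (ιC a') * γ t (ιC a) = γ t (ιC d) := by
  obtain ⟨d, h1, h2⟩ := prod_gen₂ hB hC (t⁻¹ * s) a' a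
  refine ⟨d, ?_, ?_⟩
  · rw [← h1, hB.beta_mul, hB.beta_comp, mul_inv_cancel_left]
  · rw [← h2, hC.beta_mul, hC.beta_comp, mul_inv_cancel_left]

end EnvAux

namespace EnvAux

variable {α : CStarPartialAction G A} {β : G → B → B} {ι : A →⋆ₙₐ[ℂ] B}
  {γ : G → C → C} {ιC : A →⋆ₙₐ[ℂ] C}

theorem main_inj (hB : EnvAux α β ι) (hC : EnvAux α γ ιC)
    (hdense : closure (Submodule.span ℂ {x : C | ∃ t a, x = γ t (ιC a)} : Set C) = Set.univ) :
    ∀ p : B × C,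
      p ∈ closure (Submodule.span ℂ
        {q : B × C | ∃ t a, q = (β t (ι a), γ t (ιC a))} : Set (B × C)) →
      p.1 = 0 → p.2 = 0 := by
  set P : Set (B × C) := {q | ∃ t a, q = (β t (ι a), γ t (ιC a))} with hPdef
  have collapse : ∀ q ∈ Submodule.span ℂ P, ∀ (t : G) (a : A),
      ∃ D : A, q * (β t (ι a), γ t (ιC a)) = (β t (ι D), γ t (ιC D)) := by
    intro q hq t a
    induction hq using Submodule.span_induction with
    | mem x hx =>
      obtain ⟨s, a', rfl⟩ := hx
      obtain ⟨d, h1, h2⟩ := pair_mul hB hC s t a' a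
      exact ⟨d, by rw [Prod.mk_mul_mk, h1, h2]⟩
    | zero => exact ⟨0, by rw [zero_mul]; simp [map_zero, hB.beta_zero, hC.beta_zero, Prod.mk_zero_zero]⟩
    | add x y hx hy ihx ihy =>
      obtain ⟨D1, hD1⟩ := ihx
      obtain ⟨D2, hD2⟩ := ihy
      refine ⟨D1 + D2, ?_⟩
      rw [add_mul, hD1, hD2, Prod.mk_add_mk, map_add, map_add, hB.beta_add, hC.beta_add]
    | smul c x hx ihx =>
      obtain ⟨D, hD⟩ := ihx
      refine ⟨c • D, ?_⟩
      rw [smul_mul_assoc, hD, Prod.smul_mk, map_smul, map_smul, hB.beta_smul, hC.beta_smul]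
  intro p hp hp1
  have step1 : ∀ (t : G) (a : A), p.2 * γ t (ιC a) = 0 := by
    intro t a
    obtain ⟨u, hu, hulim⟩ := mem_closure_iff_seq_limit.mp hp
    choose D hD using fun n => collapse (u n) (hu n) t a
    set g : B × C := (β t (ι a), γ t (ιC a)) with hg
    have hmul : Filter.Tendsto (fun n => u n * g) Filter.atTop (nhds (p * g)) :=
      hulim.mul tendsto_const_nhds
    have h0 : Filter.Tendsto (fun n => (u n * g).1) Filter.atTop (nhds ((p * g).1)) :=
      (continuous_fst.tendsto _).comp hmul
    have he : (fun n => (u n * g).1) = fun n => β t (ι (D n)) := funext fun n => by rw [hD n]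
    rw [he] at h0
    have hpg1 : (p * g).1 = 0 := by
      show p.1 * g.1 = 0
      rw [hp1, zero_mul]
    rw [hpg1] at h0
    have hnorm : Filter.Tendsto (fun n => ‖D n‖) Filter.atTop (nhds 0) := by
      have := h0.norm
      simpa [hB.beta_norm t, hB.iota_norm] using this
    have h2 : Filter.Tendsto (fun n => γ t (ιC (D n))) Filter.atTop (nhds 0) := by
      rw [tendsto_zero_iff_norm_tendsto_zero]
      simpa [hC.beta_norm t, hC.iota_norm] using hnorm
    have h3 : Filter.Tendsto (fun n => (u n * g).2) Filter.atTop (nhds ((p * g).2)) :=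
      (continuous_snd.tendsto _).comp hmul
    have he2 : (fun n => (u n * g).2) = fun n => γ t (ιC (D n)) := funext fun n => by rw [hD n]
    rw [he2] at h3
    exact tendsto_nhds_unique h3 h2
  have hK : ∀ v : C, p.2 * v = 0 := by
    let K : Submodule ℂ C :=
      { carrier := {v | p.2 * v = 0}
        add_mem' := fun {x y} hx hy => by
          simp only [Set.mem_setOf_eq] at *
          rw [mul_add, hx, hy, add_zero]
        zero_mem' := mul_zero _
        smul_mem' := fun c v hv => by
          simp only [Set.mem_setOf_eq] at *
          rw [mul_smul_comm, hv, smul_zero] }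
    have hclosed : IsClosed (K : Set C) :=
      isClosed_eq (continuous_const.mul continuous_id) continuous_const
    have hsub : Submodule.span ℂ {x : C | ∃ t a, x = γ t (ιC a)} ≤ K :=
      Submodule.span_le.mpr (by rintro x ⟨t, a, rfl⟩; exact step1 t a)
    intro v
    have hv : v ∈ closure (Submodule.span ℂ {x : C | ∃ t a, x = γ t (ιC a)} : Set C) := by
      rw [hdense]; trivial
    exact hclosed.closure_subset_iff.mpr hsub hv
  exact (CStarRing.mul_star_self_eq_zero_iff _).mp (hK (star p.2))

end EnvAux

namespace EnvAux

variable {α : CStarPartialAction G A} {β : G → B → B} {ι : A →⋆ₙₐ[ℂ] B}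

theorem beta_sub (h : EnvAux α β ι) (t : G) (x y : B) : β t (x - y) = β t x - β t y := by
  rw [sub_eq_add_neg, sub_eq_add_neg, ← neg_one_smul ℂ y, ← neg_one_smul ℂ (β t y),
    h.beta_add, h.beta_smul]

theorem beta_continuous (h : EnvAux α β ι) (t : G) : Continuous (β t) := by
  refine (Isometry.continuous ?_)
  refine Isometry.of_dist_eq fun x y => ?_
  rw [dist_eq_norm, dist_eq_norm, ← h.beta_sub, h.beta_norm]

end EnvAux


/-- Uniqueness of the enveloping action of a partial action on a C*-algebra: if
`(β, B, ι_B)` and `(γ, C, ι_C)` are two enveloping actions of the partial action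
`(α, A)` (so `A` sits as a closed two-sided ideal, the global action restricts to `α`,
and the closed linear span of the orbit of `A` is everything), then there is a unique
*-isomorphism `φ : B ≃ C` intertwining `β` and `γ` and restricting to the identity
on `A`. -/
theorem CStarPartialAction.enveloping_unique
    (α : CStarPartialAction G A)
    (β : G → B → B) (hβ : IsContCStarAction G B β)
    (γ : G → C → C) (hγ : IsContCStarAction G C γ)
    (ιB : A →⋆ₙₐ[ℂ] B) (ιC : A →⋆ₙₐ[ℂ] C)
    (hιB_inj : Function.Injective ιB) (hιC_inj : Function.Injective ιC)
    (hιB_closed : IsClosed (Set.range ιB)) (hιC_closed : IsClosed (Set.range ιC))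
    (hιB_left : ∀ b : B, ∀ x ∈ Set.range ιB, b * x ∈ Set.range ιB)
    (hιB_right : ∀ b : B, ∀ x ∈ Set.range ιB, x * b ∈ Set.range ιB)
    (hιC_left : ∀ c : C, ∀ x ∈ Set.range ιC, c * x ∈ Set.range ιC)
    (hιC_right : ∀ c : C, ∀ x ∈ Set.range ιC, x * c ∈ Set.range ιC)
    (hB_dom : ∀ t, ιB '' α.dom t = Set.range ιB ∩ (β t '' Set.range ιB))
    (hC_dom : ∀ t, ιC '' α.dom t = Set.range ιC ∩ (γ t '' Set.range ιC))
    (hB_res : ∀ t, ∀ a ∈ α.dom t⁻¹, β t (ιB a) = ιB (α.act t a))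
    (hC_res : ∀ t, ∀ a ∈ α.dom t⁻¹, γ t (ιC a) = ιC (α.act t a))
    (hB_dense : closure (Submodule.span ℂ {x : B | ∃ t a, x = β t (ιB a)} : Set B)
      = Set.univ)
    (hC_dense : closure (Submodule.span ℂ {x : C | ∃ t a, x = γ t (ιC a)} : Set C)
      = Set.univ) :
    ∃! φ : B ≃⋆ₐ[ℂ] C,
      (∀ (t : G) (b : B), φ (β t b) = γ t (φ b)) ∧ ∀ a : A, φ (ιB a) = ιC a := by
  classical
  letI : NonUnitalCStarAlgebra A := {}
  letI : NonUnitalCStarAlgebra B := {}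
  letI : NonUnitalCStarAlgebra C := {}
  have hBe : EnvAux α β ιB := ⟨hβ, hιB_inj, hιB_left, hιB_right, hB_dom, hB_res⟩
  have hCe : EnvAux α γ ιC := ⟨hγ, hιC_inj, hιC_left, hιC_right, hC_dom, hC_res⟩
  let P : Set (B × C) := {q | ∃ t a, q = (β t (ιB a), γ t (ιC a))}
  let M : Submodule ℂ (B × C) := Submodule.span ℂ P
  have hPmul : ∀ p ∈ P, ∀ q ∈ P, p * q ∈ P := by
    rintro p ⟨s, a', rfl⟩ q ⟨t, a, rfl⟩
    obtain ⟨d, h1, h2⟩ := EnvAux.pair_mul hBe hCe s t a' a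
    exact ⟨t, d, by rw [Prod.mk_mul_mk, h1, h2]⟩
  have hPstar : ∀ p ∈ P, star p ∈ P := by
    rintro p ⟨t, a, rfl⟩
    refine ⟨t, star a, ?_⟩
    have h1 : star ((β t (ιB a), γ t (ιC a)) : B × C)
        = (star (β t (ιB a)), star (γ t (ιC a))) := rfl
    rw [h1, ← hBe.beta_star, ← hCe.beta_star, ← map_star, ← map_star]
  have hMmulP : ∀ x ∈ M, ∀ q ∈ P, x * q ∈ M := by
    intro x hx q hq
    induction hx using Submodule.span_induction with
    | mem y hy => exact Submodule.subset_span (hPmul y hy q hq)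
    | zero => rw [zero_mul]; exact M.zero_mem
    | add y z hy hz ihy ihz => rw [add_mul]; exact M.add_mem ihy ihz
    | smul c y hy ihy => rw [smul_mul_assoc]; exact M.smul_mem c ihy
  have hMmul : ∀ x ∈ M, ∀ y ∈ M, x * y ∈ M := by
    intro x hx y hy
    induction hy using Submodule.span_induction with
    | mem z hz => exact hMmulP x hx z hz
    | zero => rw [mul_zero]; exact M.zero_mem
    | add y z hy hz ihy ihz => rw [mul_add]; exact M.add_mem ihy ihz
    | smul c y hy ihy => rw [mul_smul_comm]; exact M.smul_mem c ihy
  have hMstar : ∀ x ∈ M, star x ∈ M := by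
    intro x hx
    induction hx using Submodule.span_induction with
    | mem y hy => exact Submodule.subset_span (hPstar y hy)
    | zero => rw [star_zero]; exact M.zero_mem
    | add y z hy hz ihy ihz => rw [star_add]; exact M.add_mem ihy ihz
    | smul c y hy ihy => rw [star_smul]; exact M.smul_mem _ ihy
  let R : NonUnitalStarSubalgebra ℂ (B × C) :=
    { M.toNonUnitalSubalgebra (fun x y hx hy => hMmul x hx y hy) with
      star_mem' := fun {x} hx => hMstar x hx }
  let Δ := R.topologicalClosure
  haveI hΔclosed : IsClosed (Δ : Set (B × C)) := R.isClosed_topologicalClosure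
  have hmemclos : ∀ p : Δ, (p : B × C) ∈ closure (M : Set (B × C)) := fun p => p.2
  have hPΔ : ∀ {x : B × C}, x ∈ P → x ∈ Δ := fun hx =>
    R.le_topologicalClosure (Submodule.subset_span hx)
  let πB : Δ →⋆ₙₐ[ℂ] B :=
    { toFun := fun p => (p : B × C).1
      map_smul' := fun c p => rfl
      map_zero' := rfl
      map_add' := fun p q => rfl
      map_mul' := fun p q => rfl
      map_star' := fun p => rfl }
  let πC : Δ →⋆ₙₐ[ℂ] C :=
    { toFun := fun p => (p : B × C).2
      map_smul' := fun c p => rfl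
      map_zero' := rfl
      map_add' := fun p q => rfl
      map_mul' := fun p q => rfl
      map_star' := fun p => rfl }
  have hMclos : ∀ p ∈ M, p ∈ closure (Submodule.span ℂ P : Set (B × C)) :=
    fun p hp => subset_closure hp
  have injB : Function.Injective πB := by
    intro p q hpq
    have h1 : ((p - q : Δ) : B × C).1 = 0 := by
      have : ((p - q : Δ) : B × C) = (p : B × C) - (q : B × C) := rfl
      rw [this]
      show (p : B × C).1 - (q : B × C).1 = 0
      rw [show (p : B × C).1 = πB p from rfl, show (q : B × C).1 = πB q from rfl, hpq, sub_self]
    have h2 := EnvAux.main_inj hBe hCe hC_dense ((p - q : Δ) : B × C) (hmemclos _) h1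
    have h3 : (p : B × C) = (q : B × C) := by
      have e1 : (p : B × C).1 = (q : B × C).1 := hpq
      have e2 : (p : B × C).2 = (q : B × C).2 := by
        have : ((p - q : Δ) : B × C).2 = (p : B × C).2 - (q : B × C).2 := rfl
        rw [this] at h2
        exact sub_eq_zero.mp h2
      exact Prod.ext e1 e2
    exact Subtype.ext h3
  have hswapmem : ∀ x : B × C, x ∈ closure (M : Set (B × C)) →
      ((x.2, x.1) : C × B) ∈ closure (Submodule.span ℂ
        {q : C × B | ∃ t a, q = (γ t (ιC a), β t (ιB a))} : Set (C × B)) := by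
    intro x hx
    have hmap : ∀ y ∈ M, ((y.2, y.1) : C × B) ∈
        Submodule.span ℂ {q : C × B | ∃ t a, q = (γ t (ιC a), β t (ιB a))} := by
      intro y hy
      induction hy using Submodule.span_induction with
      | mem z hz =>
        obtain ⟨t, a, rfl⟩ := hz
        exact Submodule.subset_span ⟨t, a, rfl⟩
      | zero => exact Submodule.zero_mem _
      | add y z hy hz ihy ihz => exact Submodule.add_mem _ ihy ihz
      | smul c y hy ihy => exact Submodule.smul_mem _ c ihy
    have hcont : Continuous fun y : B × C => ((y.2, y.1) : C × B) :=
      continuous_snd.prodMk continuous_fst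
    have h1 : ((x.2, x.1) : C × B) ∈
        closure ((fun y : B × C => ((y.2, y.1) : C × B)) '' (M : Set (B × C))) :=
      image_closure_subset_closure_image hcont (Set.mem_image_of_mem _ hx)
    refine closure_mono ?_ h1
    rintro z ⟨y, hy, rfl⟩
    exact hmap y hy
  have injC : Function.Injective πC := by
    intro p q hpq
    have h1 : ((p - q : Δ) : B × C).2 = 0 := by
      show (p : B × C).2 - (q : B × C).2 = 0
      rw [show (p : B × C).2 = πC p from rfl, show (q : B × C).2 = πC q from rfl, hpq, sub_self]
    have hmem := hswapmem _ (hmemclos (p - q))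
    have h2 := EnvAux.main_inj hCe hBe hB_dense
      (((p - q : Δ) : B × C).2, ((p - q : Δ) : B × C).1) hmem h1
    have h3 : (p : B × C) = (q : B × C) := by
      have e2 : (p : B × C).2 = (q : B × C).2 := hpq
      have e1 : (p : B × C).1 = (q : B × C).1 := by
        have : (((p - q : Δ) : B × C).2, ((p - q : Δ) : B × C).1).2
            = (p : B × C).1 - (q : B × C).1 := rfl
        rw [this] at h2
        exact sub_eq_zero.mp h2
      exact Prod.ext e1 e2
    exact Subtype.ext h3
  have isoB : Isometry πB := NonUnitalStarAlgHom.isometry πB injB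
  have isoC : Isometry πC := NonUnitalStarAlgHom.isometry πC injC
  have surjB : Function.Surjective πB := by
    have hclosedrange : IsClosed (Set.range πB) := isoB.isClosedEmbedding.isClosed_range
    have hspan : (Submodule.span ℂ {x : B | ∃ t a, x = β t (ιB a)} : Set B)
        ⊆ Set.range πB := by
      intro x hx
      have hx' : x ∈ Submodule.span ℂ {x : B | ∃ t a, x = β t (ιB a)} := hx
      clear hx
      induction hx' using Submodule.span_induction with
      | mem y hy =>
        obtain ⟨t, a, rfl⟩ := hy
        exact ⟨⟨(β t (ιB a), γ t (ιC a)), hPΔ ⟨t, a, rfl⟩⟩, rfl⟩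
      | zero => exact ⟨0, map_zero πB⟩
      | add y z hy hz ihy ihz =>
        obtain ⟨p, rfl⟩ := ihy
        obtain ⟨q, rfl⟩ := ihz
        exact ⟨p + q, map_add πB p q⟩
      | smul c y hy ihy =>
        obtain ⟨p, rfl⟩ := ihy
        exact ⟨c • p, map_smul πB c p⟩
    intro b
    have hb : b ∈ closure (Submodule.span ℂ {x : B | ∃ t a, x = β t (ιB a)} : Set B) := by
      rw [hB_dense]; trivial
    exact hclosedrange.closure_subset_iff.mpr hspan hb
  have surjC : Function.Surjective πC := by
    have hclosedrange : IsClosed (Set.range πC) := isoC.isClosedEmbedding.isClosed_range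
    have hspan : (Submodule.span ℂ {x : C | ∃ t a, x = γ t (ιC a)} : Set C)
        ⊆ Set.range πC := by
      intro x hx
      have hx' : x ∈ Submodule.span ℂ {x : C | ∃ t a, x = γ t (ιC a)} := hx
      clear hx
      induction hx' using Submodule.span_induction with
      | mem y hy =>
        obtain ⟨t, a, rfl⟩ := hy
        exact ⟨⟨(β t (ιB a), γ t (ιC a)), hPΔ ⟨t, a, rfl⟩⟩, rfl⟩
      | zero => exact ⟨0, map_zero πC⟩
      | add y z hy hz ihy ihz =>
        obtain ⟨p, rfl⟩ := ihy
        obtain ⟨q, rfl⟩ := ihz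
        exact ⟨p + q, map_add πC p q⟩
      | smul c y hy ihy =>
        obtain ⟨p, rfl⟩ := ihy
        exact ⟨c • p, map_smul πC c p⟩
    intro b
    have hb : b ∈ closure (Submodule.span ℂ {x : C | ∃ t a, x = γ t (ιC a)} : Set C) := by
      rw [hC_dense]; trivial
    exact hclosedrange.closure_subset_iff.mpr hspan hb
  let eB : Δ ≃⋆ₐ[ℂ] B := StarAlgEquiv.ofBijective πB ⟨injB, surjB⟩
  let eC : Δ ≃⋆ₐ[ℂ] C := StarAlgEquiv.ofBijective πC ⟨injC, surjC⟩
  let φ : B ≃⋆ₐ[ℂ] C := eB.symm.trans eC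
  have hφ : ∀ p : Δ, φ ((p : B × C).1) = (p : B × C).2 := by
    intro p
    have h1 : eB.symm ((p : B × C).1) = p := by
      have : eB p = (p : B × C).1 := rfl
      rw [← this]
      exact eB.symm_apply_apply p
    show eC (eB.symm ((p : B × C).1)) = (p : B × C).2
    rw [h1]
    exact rfl
  have hφι : ∀ a : A, φ (ιB a) = ιC a := by
    intro a
    have hmem : ((ιB a, ιC a) : B × C) ∈ Δ :=
      hPΔ ⟨1, a, by rw [hBe.beta_one, hCe.beta_one]⟩
    exact hφ ⟨(ιB a, ιC a), hmem⟩
  have hinv : ∀ (t : G), ∀ x : B × C, x ∈ closure (M : Set (B × C)) →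
      ((β t x.1, γ t x.2) : B × C) ∈ closure (M : Set (B × C)) := by
    intro t x hx
    have hmap : ∀ y ∈ M, ((β t y.1, γ t y.2) : B × C) ∈ M := by
      intro y hy
      induction hy using Submodule.span_induction with
      | mem z hz =>
        obtain ⟨s, a, rfl⟩ := hz
        refine Submodule.subset_span ⟨t * s, a, ?_⟩
        show (β t (β s (ιB a)), γ t (γ s (ιC a))) = _
        rw [hBe.beta_comp, hCe.beta_comp]
      | zero =>
        have h0 : ((β t ((0 : B × C)).1, γ t ((0 : B × C)).2) : B × C) = 0 := by
          show ((β t (0 : B), γ t (0 : C)) : B × C) = 0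
          rw [hBe.beta_zero, hCe.beta_zero]; rfl
        rw [h0]; exact M.zero_mem
      | add y z hy hz ihy ihz =>
        have h0 : ((β t ((y + z : B × C)).1, γ t ((y + z : B × C)).2) : B × C)
            = (β t y.1, γ t y.2) + (β t z.1, γ t z.2) := by
          show ((β t (y.1 + z.1), γ t (y.2 + z.2)) : B × C) = _
          rw [hBe.beta_add, hCe.beta_add]; rfl
        rw [h0]; exact M.add_mem ihy ihz
      | smul c y hy ihy =>
        have h0 : ((β t ((c • y : B × C)).1, γ t ((c • y : B × C)).2) : B × C)
            = c • ((β t y.1, γ t y.2) : B × C) := by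
          show ((β t (c • y.1), γ t (c • y.2)) : B × C) = _
          rw [hBe.beta_smul, hCe.beta_smul]; rfl
        rw [h0]; exact M.smul_mem c ihy
    have hcont : Continuous fun y : B × C => ((β t y.1, γ t y.2) : B × C) :=
      ((hBe.beta_continuous t).comp continuous_fst).prodMk
        ((hCe.beta_continuous t).comp continuous_snd)
    have h1 : ((β t x.1, γ t x.2) : B × C) ∈
        closure ((fun y : B × C => ((β t y.1, γ t y.2) : B × C)) '' (M : Set (B × C))) :=
      image_closure_subset_closure_image hcont (Set.mem_image_of_mem _ hx)
    refine closure_mono ?_ h1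
    rintro z ⟨y, hy, rfl⟩
    exact hmap y hy
  have hφβ : ∀ (t : G) (b : B), φ (β t b) = γ t (φ b) := by
    intro t b
    obtain ⟨p, hp⟩ := surjB b
    have hp1 : (p : B × C).1 = b := hp
    have hmem : ((β t (p : B × C).1, γ t (p : B × C).2) : B × C) ∈ Δ :=
      hinv t _ (hmemclos p)
    have h1 : φ (β t (p : B × C).1) = γ t ((p : B × C).2) :=
      hφ ⟨(β t (p : B × C).1, γ t (p : B × C).2), hmem⟩
    have h2 : φ ((p : B × C).1) = (p : B × C).2 := hφ p
    rw [hp1] at h1 h2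
    rw [← h2] at h1
    exact h1
  refine ⟨φ, ⟨hφβ, hφι⟩, ?_⟩
  rintro ψ ⟨hψβ, hψι⟩
  have hcontψ : Continuous ψ :=
    (NonUnitalStarAlgHom.isometry ψ (EquivLike.injective ψ)).continuous
  have hcontφ : Continuous φ :=
    (NonUnitalStarAlgHom.isometry φ (EquivLike.injective φ)).continuous
  have hEq : Set.EqOn ψ φ (Submodule.span ℂ {x : B | ∃ t a, x = β t (ιB a)} : Set B) := by
    intro x hx
    have hx' : x ∈ Submodule.span ℂ {x : B | ∃ t a, x = β t (ιB a)} := hx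
    clear hx
    induction hx' using Submodule.span_induction with
    | mem y hy =>
      obtain ⟨t, a, rfl⟩ := hy
      show ψ _ = φ _
      rw [hψβ, hφβ, hψι, hφι]
    | zero => show ψ 0 = φ 0; rw [map_zero, map_zero]
    | add y z hy hz ihy ihz => show ψ _ = φ _; rw [map_add, map_add, ihy, ihz]
    | smul c y hy ihy => show ψ _ = φ _; rw [map_smul, map_smul, ihy]
  have hfun : (ψ : B → C) = φ :=
    Continuous.ext_on (dense_iff_closure_eq.mpr hB_dense) hcontψ hcontφ hEq
  exact DFunLike.ext ψ φ fun b => congrFun hfun b
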